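/- Let p_1, …, p_n, w_1, …, w_n ≥ 0 and P, W ≥ 0 be given (a Knapsack instance). Construct the BNPG game with symmetric altruism: V = {u_1, …, u_{2n+1}}; E = {{u_i, u_{n+i}}, {u_i, u_{2n+1}} : i ∈ [n]} (a tree); a = 1; g_{u_{2n+1}}(x) = 0, g_{u_i}(x) = p_i·x and g_{u_{n+i}}(x) = P·x for all x ≥ 0 and i ∈ [n]; c_v = P for all v ∈ V. Assign to each undirected altruistic edge {u_{2n+1}, u_i} the cost w_i and to each edge {u_{n+i}, u_i} the cost 0 (i ∈ [n]). Then the following are equivalent: (1) there exists S ⊆ [n] with ∑_{i∈S} p_i ≥ P and ∑_{i∈S} w_i ≤ W; (2) there exists a set E' of undirected edges, each edge of E' being an edge of E, with total cost at most W such that the all-ones profile (every player invests) is a pure strategy Nash equilibrium of the BNPG game with symmetric altruism (G, (V,E'), (g_v), (c_v), 1). -/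

import Mathlib

open Finset

/-- `Δg(t) = g(t+1) - g(t)`. -/
def dg (g : ℕ → ℝ) (t : ℕ) : ℝ := g (t + 1) - g t

/-- Number of `G`-neighbors of `v` playing 1 in the profile `x`. -/
def nv {W : Type*} [Fintype W] [DecidableEq W] (G : SimpleGraph W) [DecidableRel G.Adj]
    (x : W → Bool) (v : W) : ℕ :=
  ((G.neighborFinset v).filter (fun u => x u = true)).card

/-- Utility of player `v` in a BNPG game with altruism: input graph `G`,
altruistic (out-)neighborhoods `N`, externality functions `g`, costs `c`,
altruism parameter `a`. -/
def util {W : Type*} [Fintype W] [DecidableEq W] (G : SimpleGraph W) [DecidableRel G.Adj]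
    (N : W → Finset W) (g : W → ℕ → ℝ) (c : W → ℝ) (a : ℝ)
    (x : W → Bool) (v : W) : ℝ :=
  g v ((x v).toNat + nv G x v)
    + a * ∑ u ∈ N v, g u ((x u).toNat + nv G x u)
    - c v * (x v).toNat

/-- Pure strategy Nash equilibrium of a BNPG game with altruism. -/
def isPSNE {W : Type*} [Fintype W] [DecidableEq W] (G : SimpleGraph W) [DecidableRel G.Adj]
    (N : W → Finset W) (g : W → ℕ → ℝ) (c : W → ℝ) (a : ℝ) (x : W → Bool) : Prop :=
  ∀ v : W, ∀ b : Bool,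
    util G N g c a x v ≥ util G N g c a (Function.update x v b) v

/-- Vertex set of the Knapsack reduction: `Sum.inl (Sum.inl i)` is `u_{i+1}`,
`Sum.inl (Sum.inr i)` is `u_{n+i+1}`, and `Sum.inr ()` is `u_{2n+1}`. -/
abbrev VK (n : ℕ) := (Fin n ⊕ Fin n) ⊕ Unit

/-- Adjacency of the tree `E = {{u_i, u_{n+i}}, {u_i, u_{2n+1}} : i ∈ [n]}`. -/
def adjK {n : ℕ} : VK n → VK n → Bool
  | Sum.inl (Sum.inl i), Sum.inl (Sum.inr j) => decide (i = j)
  | Sum.inl (Sum.inr i), Sum.inl (Sum.inl j) => decide (i = j)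
  | Sum.inl (Sum.inl _), Sum.inr _ => true
  | Sum.inr _, Sum.inl (Sum.inl _) => true
  | _, _ => false

/-- The input network (a tree) of the Knapsack reduction. -/
def GK (n : ℕ) : SimpleGraph (VK n) where
  Adj a b := adjK a b = true
  symm := ⟨by
    rintro ((i | i) | u) ((j | j) | u') h <;> simp_all [adjK]⟩
  loopless := ⟨by
    rintro ((i | i) | u) h <;> simp [adjK] at h⟩

instance (n : ℕ) : DecidableRel (GK n).Adj :=
  fun a b => inferInstanceAs (Decidable (adjK a b = true))

/-- Externality functions: `g_{u_i}(x) = p_i·x`, `g_{u_{n+i}}(x) = P·x`,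
`g_{u_{2n+1}}(x) = 0`. -/
def gK {n : ℕ} (p : Fin n → ℝ) (P : ℝ) : VK n → ℕ → ℝ
  | Sum.inl (Sum.inl i) => fun t => p i * t
  | Sum.inl (Sum.inr _) => fun t => P * t
  | Sum.inr _ => fun _ => 0


section helpers
variable {W' : Type*} [Fintype W'] [DecidableEq W'] (G : SimpleGraph W') [DecidableRel G.Adj]

variable {W' : Type*} [Fintype W'] [DecidableEq W'] (G : SimpleGraph W') [DecidableRel G.Adj]

lemma nv_all_true (v : W') : nv G (fun _ => true) v = G.degree v := by
  unfold nv
  rw [Finset.filter_true_of_mem (fun _ _ => rfl)]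
  rfl

lemma nv_upd_self (v : W') : nv G (Function.update (fun _ => true) v false) v = G.degree v := by
  unfold nv
  rw [Finset.filter_true_of_mem, SimpleGraph.card_neighborFinset_eq_degree]
  intro u hu
  have hne : u ≠ v := ((SimpleGraph.mem_neighborFinset _ _ _).mp hu).ne'
  simp [Function.update_of_ne hne]

lemma nv_upd_adj {v u : W'} (h : G.Adj v u) :
    nv G (Function.update (fun _ => true) v false) u = G.degree u - 1 := by
  unfold nv
  have he : ((G.neighborFinset u).filter
      (fun w => Function.update (fun _ => true) v false w = true)) = (G.neighborFinset u).erase v := by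
    ext w
    by_cases hw : w = v <;> simp [hw, Function.update_apply]
  rw [he, Finset.card_erase_of_mem]
  · rfl
  · exact (SimpleGraph.mem_neighborFinset _ _ _).mpr h.symm

lemma util_all_true (N : W' → Finset W') (g : W' → ℕ → ℝ) (c : W' → ℝ) (a : ℝ) (v : W') :
    util G N g c a (fun _ => true) v
      = g v (1 + G.degree v) + a * ∑ u ∈ N v, g u (1 + G.degree u) - c v := by
  simp [util, nv_all_true]

lemma util_upd_false (N : W' → Finset W') (g : W' → ℕ → ℝ) (c : W' → ℝ) (a : ℝ) (v : W')
    (hN : ∀ u ∈ N v, G.Adj v u) :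
    util G N g c a (Function.update (fun _ => true) v false) v
      = g v (G.degree v) + a * ∑ u ∈ N v, g u (G.degree u) := by
  unfold util
  rw [nv_upd_self, Function.update_self]
  have hs : ∑ u ∈ N v, g u ((Function.update (fun _ => true) v false u).toNat
        + nv G (Function.update (fun _ => true) v false) u)
      = ∑ u ∈ N v, g u (G.degree u) := by
    refine Finset.sum_congr rfl (fun u hu => ?_)
    have hadj := hN u hu
    have hne : u ≠ v := hadj.ne'
    rw [Function.update_of_ne hne, nv_upd_adj G hadj]
    have hd : 0 < G.degree u := by
      rw [← SimpleGraph.card_neighborFinset_eq_degree]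
      exact Finset.card_pos.mpr ⟨v, (SimpleGraph.mem_neighborFinset _ _ _).mpr hadj.symm⟩
    congr 1
    simp only [Bool.toNat_true]
    omega
  rw [hs]
  simp

lemma psne_all_true_iff (N : W' → Finset W') (g : W' → ℕ → ℝ) (c : W' → ℝ) (a : ℝ)
    (hN : ∀ v, ∀ u ∈ N v, G.Adj v u) :
    isPSNE G N g c a (fun _ => true) ↔
      ∀ v, c v ≤ dg (g v) (G.degree v) + a * ∑ u ∈ N v, dg (g u) (G.degree u) := by
  have key : ∀ v : W',
      (util G N g c a (fun _ => true) v ≥ util G N g c a (Function.update (fun _ => true) v false) v)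
        ↔ c v ≤ dg (g v) (G.degree v) + a * ∑ u ∈ N v, dg (g u) (G.degree u) := by
    intro v
    rw [util_all_true, util_upd_false G N g c a v (hN v)]
    have hsum : ∑ u ∈ N v, dg (g u) (G.degree u)
        = ∑ u ∈ N v, g u (1 + G.degree u) - ∑ u ∈ N v, g u (G.degree u) := by
      rw [← Finset.sum_sub_distrib]
      exact Finset.sum_congr rfl (fun u _ => by rw [dg, add_comm])
    rw [hsum, dg, add_comm (G.degree v) 1]
    constructor <;> intro h <;>
      nlinarith [mul_sub a (∑ u ∈ N v, g u (1 + G.degree u)) (∑ u ∈ N v, g u (G.degree u))]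
  constructor
  · intro h v
    exact (key v).mp (h v false)
  · intro h v b
    cases b
    · exact (key v).mpr (h v)
    · have : Function.update (fun _ => true) v true = fun _ : W' => true := by
        funext u; simp [Function.update_apply]
      rw [this]

end helpers

section concrete
variable {n : ℕ}

lemma nbr_center : (GK n).neighborFinset (Sum.inr ())
    = Finset.univ.image (fun i : Fin n => (Sum.inl (Sum.inl i) : VK n)) := by
  ext u
  rcases u with ((i | i) | u) <;>
    simp only [SimpleGraph.mem_neighborFinset] <;> simp [GK, adjK]

lemma deg_center : (GK n).degree (Sum.inr ()) = n := by
  rw [SimpleGraph.degree, nbr_center,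
    Finset.card_image_of_injective _ (fun a b h => by simpa using h)]
  simp

lemma nbr_l (i : Fin n) : (GK n).neighborFinset (Sum.inl (Sum.inl i))
    = {Sum.inl (Sum.inr i), Sum.inr ()} := by
  ext u
  rcases u with ((j | j) | u) <;>
    simp only [SimpleGraph.mem_neighborFinset] <;> simp [GK, adjK, @eq_comm (Fin n)]

lemma deg_l (i : Fin n) : (GK n).degree (Sum.inl (Sum.inl i)) = 2 := by
  rw [SimpleGraph.degree, nbr_l]
  simp

lemma nbr_r (i : Fin n) : (GK n).neighborFinset (Sum.inl (Sum.inr i))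
    = {Sum.inl (Sum.inl i)} := by
  ext u
  rcases u with ((j | j) | u) <;>
    simp only [SimpleGraph.mem_neighborFinset] <;> simp [GK, adjK, @eq_comm (Fin n)]

lemma deg_r (i : Fin n) : (GK n).degree (Sum.inl (Sum.inr i)) = 1 := by
  rw [SimpleGraph.degree, nbr_r]; simp

variable {p : Fin n → ℝ} {P : ℝ}

lemma dg_gK_l (i : Fin n) (t : ℕ) : dg (gK p P (Sum.inl (Sum.inl i))) t = p i := by
  simp [dg, gK]; ring

lemma dg_gK_r (i : Fin n) (t : ℕ) : dg (gK p P (Sum.inl (Sum.inr i))) t = P := by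
  simp [dg, gK]; ring

lemma dg_gK_c (u : Unit) (t : ℕ) : dg (gK p P (Sum.inr u)) t = 0 := by
  simp [dg, gK]

/-- The altruistic network built from a knapsack solution `S`. -/
def NS {n : ℕ} (S : Finset (Fin n)) : VK n → Finset (VK n)
  | Sum.inl (Sum.inl i) =>
      insert (Sum.inl (Sum.inr i)) (if i ∈ S then {Sum.inr ()} else ∅)
  | Sum.inl (Sum.inr i) => {Sum.inl (Sum.inl i)}
  | Sum.inr _ => S.image (fun i => Sum.inl (Sum.inl i))

end concrete

/-- correctness of the Knapsack reduction for ANM with symmetric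
altruism on a tree. The Knapsack instance `(p, w, P, W)` has a solution iff there is
an undirected altruistic network `N` (a symmetric neighborhood system whose edges
join `G`-adjacent vertices) whose cost — the total weight of the edges
`{u_{2n+1}, u_i}` used, the edges `{u_i, u_{n+i}}` being free — is at most `W`,
making the all-invest profile a PSNE. -/
theorem statement15 (n : ℕ) (p w : Fin n → ℝ) (P W : ℝ)
    (hp : ∀ i, 0 ≤ p i) (hw : ∀ i, 0 ≤ w i) (hP : 0 ≤ P) (hW : 0 ≤ W) :
    (∃ S : Finset (Fin n), P ≤ ∑ i ∈ S, p i ∧ ∑ i ∈ S, w i ≤ W) ↔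
    (∃ N : VK n → Finset (VK n),
      (∀ v : VK n, ∀ u ∈ N v, (GK n).Adj v u) ∧
      (∀ u v : VK n, u ∈ N v ↔ v ∈ N u) ∧
      (∑ i ∈ Finset.univ.filter
          (fun i : Fin n => (Sum.inl (Sum.inl i) : VK n) ∈ N (Sum.inr ())), w i) ≤ W ∧
      isPSNE (GK n) N (gK p P) (fun _ => P) 1 (fun _ => true)) := by
  constructor
  · rintro ⟨S, hS1, hS2⟩
    refine ⟨NS S, ?_, ?_, ?_, ?_⟩
    · rintro ((i | i) | u) x hx
      · simp only [NS, Finset.mem_insert] at hx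
        rcases hx with rfl | hx
        · show adjK _ _ = true; simp [adjK]
        · split_ifs at hx with h
          · simp only [Finset.mem_singleton] at hx
            subst hx
            show adjK _ _ = true; simp [adjK]
          · simp at hx
      · simp only [NS, Finset.mem_singleton] at hx
        subst hx
        show adjK _ _ = true; simp [adjK]
      · simp only [NS, Finset.mem_image] at hx
        obtain ⟨i, _, rfl⟩ := hx
        show adjK _ _ = true; simp [adjK]
    · rintro ((i | i) | u) ((j | j) | u') <;>
        simp [NS, Sum.inl.injEq, Sum.inr.injEq, eq_comm] <;>
        split_ifs <;> simp_all [eq_comm]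
    · have hfilter : Finset.univ.filter
          (fun i : Fin n => (Sum.inl (Sum.inl i) : VK n) ∈ NS S (Sum.inr ())) = S := by
        ext i
        simp [NS]
      rw [hfilter]; exact hS2
    · rw [psne_all_true_iff _ _ _ _ _ (by
        rintro ((i | i) | u) x hx
        · simp only [NS, Finset.mem_insert] at hx
          rcases hx with rfl | hx
          · show adjK _ _ = true; simp [adjK]
          · split_ifs at hx with h
            · simp only [Finset.mem_singleton] at hx
              subst hx
              show adjK _ _ = true; simp [adjK]
            · simp at hx
        · simp only [NS, Finset.mem_singleton] at hx
          subst hx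
          show adjK _ _ = true; simp [adjK]
        · simp only [NS, Finset.mem_image] at hx
          obtain ⟨i, _, rfl⟩ := hx
          show adjK _ _ = true; simp [adjK])]
      rintro ((i | i) | u)
      · -- v = u_i
        rw [deg_l, dg_gK_l]
        by_cases h : i ∈ S
        · have : NS S (Sum.inl (Sum.inl i))
              = {(Sum.inl (Sum.inr i) : VK n), Sum.inr ()} := by
            simp [NS, h]
          rw [this, Finset.sum_pair (by simp), dg_gK_r, dg_gK_c]
          have := hp i
          linarith
        · have : NS S (Sum.inl (Sum.inl i)) = {(Sum.inl (Sum.inr i) : VK n)} := by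
            simp [NS, h]
          rw [this, Finset.sum_singleton, dg_gK_r]
          have := hp i
          linarith
      · -- v = u_{n+i}
        rw [deg_r, dg_gK_r]
        have : NS S (Sum.inl (Sum.inr i)) = {(Sum.inl (Sum.inl i) : VK n)} := rfl
        rw [this, Finset.sum_singleton, dg_gK_l]
        have := hp i
        linarith
      · -- v = center
        rw [deg_center, dg_gK_c]
        have : NS S (Sum.inr u) = S.image (fun i => (Sum.inl (Sum.inl i) : VK n)) := rfl
        rw [this, Finset.sum_image (fun a _ b _ h => by simpa using h)]
        have : ∑ i ∈ S, dg (gK p P (Sum.inl (Sum.inl i))) ((GK n).degree (Sum.inl (Sum.inl i)))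
            = ∑ i ∈ S, p i :=
          Finset.sum_congr rfl (fun i _ => dg_gK_l i _)
        rw [this]
        linarith
  · rintro ⟨N, hadj, hsym, hcost, hpsne⟩
    refine ⟨Finset.univ.filter (fun i : Fin n => (Sum.inl (Sum.inl i) : VK n) ∈ N (Sum.inr ())),
      ?_, hcost⟩
    rw [psne_all_true_iff _ _ _ _ _ hadj] at hpsne
    have h := hpsne (Sum.inr ())
    rw [deg_center, dg_gK_c] at h
    have hNc : N (Sum.inr ())
        = (Finset.univ.filter (fun i : Fin n => (Sum.inl (Sum.inl i) : VK n) ∈ N (Sum.inr ()))).image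
          (fun i => (Sum.inl (Sum.inl i) : VK n)) := by
      ext x
      constructor
      · intro hx
        have := hadj _ _ hx
        rcases x with ((j | j) | u')
        · simp only [Finset.mem_image, Finset.mem_filter, Finset.mem_univ, true_and]
          exact ⟨j, hx, rfl⟩
        · exact absurd this (by simp [GK, adjK])
        · exact absurd this (by simp [GK, adjK])
      · intro hx
        simp only [Finset.mem_image, Finset.mem_filter, Finset.mem_univ, true_and] at hx
        obtain ⟨j, hj, rfl⟩ := hx
        exact hj
    rw [hNc, Finset.sum_image (fun a _ b _ h => by simpa using h)] at h
    have heq : ∑ i ∈ Finset.univ.filter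
          (fun i : Fin n => (Sum.inl (Sum.inl i) : VK n) ∈ N (Sum.inr ())),
          dg (gK p P (Sum.inl (Sum.inl i))) ((GK n).degree (Sum.inl (Sum.inl i)))
        = ∑ i ∈ Finset.univ.filter
          (fun i : Fin n => (Sum.inl (Sum.inl i) : VK n) ∈ N (Sum.inr ())), p i :=
      Finset.sum_congr rfl (fun i _ => dg_gK_l i _)
    rw [heq] at h
    linarith
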